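/- In the rational function field ℚ(m,s), let r = −((s−1)²(2s−1)m + (54s³+27s²−72s+23))/(2(m−27)(m+27)), and let j₁ = 4(m+27)(ms²+27s²−2ms+18s+m−21)³ / ((m−27)(2ms³+54s³−5ms²+27s²+4ms−72s−m+23)) and j₂ = −2(m−27)(ms²−459s²−2ms+486s+m−123)³ / ((m+27)(2ms³+54s³−5ms²+27s²+4ms−72s−m+23)²). Then j₁·j₂ = (s⁴−4s³+6s²+432rs−4s−288r+1)³ / r³. -/

import Mathlib

set_option maxHeartbeats 4000000

private lemma nz_of_eval (p : MvPolynomial (Fin 2) ℚ)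
    (h : MvPolynomial.eval (fun _ => (0:ℚ)) p ≠ 0) :
    algebraMap (MvPolynomial (Fin 2) ℚ) (FractionRing (MvPolynomial (Fin 2) ℚ)) p ≠ 0 := by
  intro hp
  apply h
  have : p = 0 := (map_eq_zero_iff _ (IsFractionRing.injective _ _)).mp hp
  simp [this]

private lemma key {K : Type*} [Field K] (m s : K)
    (hm1 : m - 27 ≠ 0) (hm2 : m + 27 ≠ 0)
    (hD : 2*m*s^3 + 54*s^3 - 5*m*s^2 + 27*s^2 + 4*m*s - 72*s - m + 23 ≠ 0)
    (hN : (s-1)^2*(2*s-1)*m + (54*s^3 + 27*s^2 - 72*s + 23) ≠ 0)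
    (h2 : (2:K) ≠ 0) :
    (4*(m+27)*(m*s^2 + 27*s^2 - 2*m*s + 18*s + m - 21)^3 /
      ((m-27)*(2*m*s^3 + 54*s^3 - 5*m*s^2 + 27*s^2 + 4*m*s - 72*s - m + 23))) *
    (-2*(m-27)*(m*s^2 - 459*s^2 - 2*m*s + 486*s + m - 123)^3 /
      ((m+27)*(2*m*s^3 + 54*s^3 - 5*m*s^2 + 27*s^2 + 4*m*s - 72*s - m + 23)^2)) =
    (s^4 - 4*s^3 + 6*s^2
      + 432*(-((s-1)^2*(2*s-1)*m + (54*s^3 + 27*s^2 - 72*s + 23)) / (2*(m-27)*(m+27)))*s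
      - 4*s
      - 288*(-((s-1)^2*(2*s-1)*m + (54*s^3 + 27*s^2 - 72*s + 23)) / (2*(m-27)*(m+27))) + 1)^3 /
    (-((s-1)^2*(2*s-1)*m + (54*s^3 + 27*s^2 - 72*s + 23)) / (2*(m-27)*(m+27)))^3 := by
  have hr : (-((s-1)^2*(2*s-1)*m + (54*s^3 + 27*s^2 - 72*s + 23)) / (2*(m-27)*(m+27))) ≠ 0 :=
    div_ne_zero (neg_ne_zero.mpr hN) (mul_ne_zero (mul_ne_zero h2 hm1) hm2)
  rw [eq_div_iff (pow_ne_zero 3 hr)]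
  field_simp
  have hD' : s * (s * (s * (m * 2 + 54) - m * 5 + 27) + 4 * m - 72) - m + 23 ≠ 0 := by
    convert hD using 1; ring
  rw [div_eq_iff (pow_ne_zero 3 hD')]
  ring

/-- In `ℚ(m,s)`, the product of the two `j`-invariants attached to a point of
`Y₋(9)` equals `(s⁴−4s³+6s²+432rs−4s−288r+1)³ / r³`, where
`r = −((s−1)²(2s−1)m + (54s³+27s²−72s+23))/(2(m−27)(m+27))`. -/
theorem Y9_j_invariant_product :
    let K := FractionRing (MvPolynomial (Fin 2) ℚ)
    let m : K := algebraMap (MvPolynomial (Fin 2) ℚ) K (MvPolynomial.X 0)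
    let s : K := algebraMap (MvPolynomial (Fin 2) ℚ) K (MvPolynomial.X 1)
    let r : K := -((s-1)^2*(2*s-1)*m + (54*s^3 + 27*s^2 - 72*s + 23)) / (2*(m-27)*(m+27))
    let j₁ : K := 4*(m+27)*(m*s^2 + 27*s^2 - 2*m*s + 18*s + m - 21)^3 /
      ((m-27)*(2*m*s^3 + 54*s^3 - 5*m*s^2 + 27*s^2 + 4*m*s - 72*s - m + 23))
    let j₂ : K := -2*(m-27)*(m*s^2 - 459*s^2 - 2*m*s + 486*s + m - 123)^3 /
      ((m+27)*(2*m*s^3 + 54*s^3 - 5*m*s^2 + 27*s^2 + 4*m*s - 72*s - m + 23)^2)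
    j₁ * j₂ = (s^4 - 4*s^3 + 6*s^2 + 432*r*s - 4*s - 288*r + 1)^3 / r^3 := by
  intro K m s r j₁ j₂
  refine key m s ?_ ?_ ?_ ?_ two_ne_zero
  · have := nz_of_eval (MvPolynomial.X 0 - 27) (by simp [map_ofNat])
    simpa only [map_sub, map_ofNat] using this
  · have := nz_of_eval (MvPolynomial.X 0 + 27) (by simp [map_ofNat])
    simpa only [map_add, map_ofNat] using this
  · have := nz_of_eval (2*MvPolynomial.X 0*MvPolynomial.X 1^3 + 54*MvPolynomial.X 1^3
      - 5*MvPolynomial.X 0*MvPolynomial.X 1^2 + 27*MvPolynomial.X 1^2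
      + 4*MvPolynomial.X 0*MvPolynomial.X 1 - 72*MvPolynomial.X 1 - MvPolynomial.X 0 + 23)
      (by simp [map_ofNat])
    simpa only [map_add, map_sub, map_mul, map_pow, map_ofNat] using this
  · have := nz_of_eval ((MvPolynomial.X 1 - 1)^2*(2*MvPolynomial.X 1 - 1)*MvPolynomial.X 0
      + (54*MvPolynomial.X 1^3 + 27*MvPolynomial.X 1^2 - 72*MvPolynomial.X 1 + 23))
      (by simp [map_ofNat])
    simpa only [map_add, map_sub, map_mul, map_pow, map_one, map_ofNat] using this
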